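/- Let $0<\delta\le\frac12$ and $|x|\ge 1$ in $\mathbb{R}^n$ with $1+2\delta_1\in[0,n)$. If $r\ge |x|/2$, then $\int_{B_r(x)} |y|^{-1+2\delta}\langle y\rangle^{-2\delta-2\delta_1}\,dy \le C\, r^n\, |x|^{-1-2\delta_1}$ for a constant $C$ depending only on $n,\delta,\delta_1$, where the integral is split as $\int_{B_1(0)}|y|^{-1+2\delta}dy + \int_{B_r(x)\setminus B_1(0)} |y|^{-1-2\delta_1}dy$ and both pieces are bounded by $Cr^n|x|^{-1-2\delta_1}$. -/

import Mathlib

open MeasureTheory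

open Metric Set
open scoped ENNReal

namespace Stmt15Aux

noncomputable def S (n : ℕ) : ℝ≥0∞ :=
  (volume : Measure (EuclideanSpace ℝ (Fin n))).toSphere Set.univ

lemma S_ne_top (n : ℕ) : S n ≠ ∞ := measure_ne_top _ _

lemma polar {n : ℕ} (hn : 1 ≤ n) {F : ℝ → ℝ≥0∞} (hF : Measurable F) :
    ∫⁻ x : EuclideanSpace ℝ (Fin n), F ‖x‖ =
      S n * ∫⁻ y in Set.Ioi (0:ℝ), ENNReal.ofReal (y ^ (n-1)) * F y := by
  haveI : Nonempty (Fin n) := Fin.pos_iff_nonempty.mp hn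
  set E := EuclideanSpace ℝ (Fin n) with hE
  haveI : Nontrivial E := inferInstance
  have hdim : Module.finrank ℝ E = n := finrank_euclideanSpace_fin
  have hmeas : Measurable fun p : sphere (0:E) 1 × Set.Ioi (0:ℝ) => F p.2 :=
    hF.comp (measurable_subtype_coe.comp measurable_snd)
  calc
    ∫⁻ x : E, F ‖x‖ = ∫⁻ x in ({0}ᶜ : Set E), F ‖x‖ := by
      rw [MeasureTheory.restrict_compl_singleton]
    _ = ∫⁻ x : ({0}ᶜ : Set E), F ‖x.1‖ ∂((volume : Measure E).comap (↑)) :=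
      (lintegral_subtype_comap (measurableSet_singleton 0).compl _).symm
    _ = ∫⁻ p : sphere (0:E) 1 × Set.Ioi (0:ℝ), F p.2
          ∂((volume : Measure E).toSphere.prod
            (Measure.volumeIoiPow (Module.finrank ℝ E - 1))) :=
      by rw [← (Measure.measurePreserving_homeomorphUnitSphereProd (volume : Measure E)).lintegral_comp
        hmeas]; simp only [homeomorphUnitSphereProd_apply_snd_coe]
    _ = S n * ∫⁻ y : Set.Ioi (0:ℝ), F y ∂(Measure.volumeIoiPow (Module.finrank ℝ E - 1)) := by
      rw [lintegral_prod _ hmeas.aemeasurable]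
      simp only [lintegral_const]
      rw [mul_comm]
      rfl
    _ = S n * ∫⁻ y in Set.Ioi (0:ℝ), ENNReal.ofReal (y ^ (n-1)) * F y := by
      congr 1
      rw [Measure.volumeIoiPow,
        lintegral_withDensity_eq_lintegral_mul _
          (f := fun r : Set.Ioi (0:ℝ) => ENNReal.ofReal ((r : ℝ) ^ (Module.finrank ℝ E - 1)))
          (ENNReal.measurable_ofReal.comp (measurable_subtype_coe.pow_const _))
          (g := fun y : Set.Ioi (0:ℝ) => F (y : ℝ)) (hF.comp measurable_subtype_coe)]
      rw [hdim]
      exact lintegral_subtype_comap (measurableSet_Ioi : MeasurableSet (Set.Ioi (0:ℝ)))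
        fun y => ENNReal.ofReal (y ^ (n-1)) * F y

lemma lint_ball {n : ℕ} (hn : 1 ≤ n) {p R : ℝ} (hp : -(n:ℝ) < p) (hR : 0 < R) :
    (∫⁻ x in Metric.ball (0 : EuclideanSpace ℝ (Fin n)) R, ENNReal.ofReal (‖x‖ ^ p)) =
      S n * ENNReal.ofReal (R ^ ((n:ℝ) + p) / ((n:ℝ) + p)) := by
  have hn1 : (1:ℝ) ≤ n := by exact_mod_cast hn
  have hq : -1 < (n:ℝ) - 1 + p := by linarith
  have hmf : Measurable fun y : ℝ => ENNReal.ofReal (y ^ p) := by fun_prop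
  have hFm : Measurable (Set.indicator (Set.Iio R) (fun y : ℝ => ENNReal.ofReal (y ^ p))) :=
    hmf.indicator measurableSet_Iio
  have h1 : (∫⁻ x in Metric.ball (0 : EuclideanSpace ℝ (Fin n)) R, ENNReal.ofReal (‖x‖ ^ p))
      = ∫⁻ x : EuclideanSpace ℝ (Fin n),
          Set.indicator (Set.Iio R) (fun y : ℝ => ENNReal.ofReal (y ^ p)) ‖x‖ := by
    rw [← lintegral_indicator measurableSet_ball]
    refine lintegral_congr fun y => ?_
    by_cases hy : ‖y‖ < R
    · rw [Set.indicator_of_mem (mem_ball_zero_iff.mpr hy),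
        Set.indicator_of_mem (Set.mem_Iio.mpr hy)]
    · have hy1 : y ∉ Metric.ball (0 : EuclideanSpace ℝ (Fin n)) R :=
        fun h => hy (mem_ball_zero_iff.mp h)
      have hy2 : ‖y‖ ∉ Set.Iio R := hy
      rw [Set.indicator_of_notMem hy1, Set.indicator_of_notMem hy2]
  rw [h1, polar hn hFm]
  congr 1
  have h2 : (∫⁻ y in Set.Ioi (0:ℝ), ENNReal.ofReal (y ^ (n-1)) *
      Set.indicator (Set.Iio R) (fun y : ℝ => ENNReal.ofReal (y ^ p)) y)
      = ∫⁻ y in Set.Ioi (0:ℝ),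
          Set.indicator (Set.Ioo 0 R) (fun y : ℝ => ENNReal.ofReal (y ^ ((n:ℝ) - 1 + p))) y := by
    refine setLIntegral_congr_fun measurableSet_Ioi (fun y hy => ?_)
    have hy0 : (0:ℝ) < y := hy
    by_cases hyR : y < R
    · rw [Set.indicator_of_mem (Set.mem_Iio.mpr hyR),
        Set.indicator_of_mem (Set.mem_Ioo.mpr ⟨hy0, hyR⟩),
        ← ENNReal.ofReal_mul (by positivity)]
      congr 1
      rw [← Real.rpow_natCast y (n-1), ← Real.rpow_add hy0]
      congr 1
      rw [Nat.cast_sub hn]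
      norm_num
    · have hm1 : ‖(y:ℝ)‖ ∉ Set.Iio R := by
        simp only [Real.norm_eq_abs, Set.mem_Iio, not_lt]
        exact le_trans (not_lt.mp hyR) (le_abs_self y)
      have h1' : y ∉ Set.Iio R := hyR
      have h2' : y ∉ Set.Ioo (0:ℝ) R := fun h => hyR h.2
      rw [Set.indicator_of_notMem h1', Set.indicator_of_notMem h2', mul_zero]
  rw [h2, lintegral_indicator measurableSet_Ioo, Measure.restrict_restrict measurableSet_Ioo]
  have hinter : Set.Ioo (0:ℝ) R ∩ Set.Ioi 0 = Set.Ioo 0 R :=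
    Set.inter_eq_left.mpr fun y hy => hy.1
  rw [hinter, Measure.restrict_congr_set Ioo_ae_eq_Ioc]
  have hint : IntegrableOn (fun y : ℝ => y ^ ((n:ℝ) - 1 + p)) (Set.Ioc 0 R) := by
    rw [← intervalIntegrable_iff_integrableOn_Ioc_of_le hR.le]
    exact intervalIntegral.intervalIntegrable_rpow' hq
  have hnn : 0 ≤ᵐ[volume.restrict (Set.Ioc (0:ℝ) R)] fun y : ℝ => y ^ ((n:ℝ) - 1 + p) := by
    filter_upwards [ae_restrict_mem measurableSet_Ioc] with y hy
    exact Real.rpow_nonneg hy.1.le _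
  rw [← ofReal_integral_eq_lintegral_ofReal hint hnn]
  congr 1
  rw [← intervalIntegral.integral_of_le hR.le, integral_rpow (Or.inl hq)]
  have he : (n:ℝ) - 1 + p + 1 = (n:ℝ) + p := by ring
  rw [he, Real.zero_rpow (by linarith : (n:ℝ) + p ≠ 0), sub_zero]


lemma integral_le_of_lintegral_le {α : Type*} [MeasurableSpace α] {μ : Measure α} {f : α → ℝ}
    (hm : AEStronglyMeasurable f μ) (h0 : 0 ≤ᵐ[μ] f) {B : ℝ≥0∞} (hB : B ≠ ∞)
    (h : (∫⁻ a, ENNReal.ofReal (f a) ∂μ) ≤ B) : (∫ a, f a ∂μ) ≤ B.toReal := by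
  rw [integral_eq_lintegral_of_nonneg_ae h0 hm]
  exact ENNReal.toReal_mono hB h

end Stmt15Aux

set_option maxHeartbeats 2000000 in
open Stmt15Aux in
/-- Estimate for the weight integral over large balls: for `|x| ≥ 1` and `r ≥ |x|/2`,
`∫_{B_r(x)} |y|^{-1+2δ} ⟨y⟩^{-2δ-2δ₁} dy ≤ C rⁿ |x|^{-1-2δ₁}`, with each piece of the
splitting `∫_{B_1(0)} |y|^{-1+2δ} + ∫_{B_r(x)\B_1(0)} |y|^{-1-2δ₁}` obeying the same bound. -/
theorem stmt_15 (n : ℕ) (hn : 1 ≤ n) (δ δ₁ : ℝ) (hδ : 0 < δ) (hδ' : δ ≤ 1 / 2)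
    (h1 : 0 ≤ 1 + 2 * δ₁) (h2 : 1 + 2 * δ₁ < (n : ℝ)) :
    ∃ C > 0, ∀ x : EuclideanSpace ℝ (Fin n), 1 ≤ ‖x‖ → ∀ r : ℝ, ‖x‖ / 2 ≤ r →
      (∫ y in Metric.ball x r,
          ‖y‖ ^ (-1 + 2 * δ) * (1 + ‖y‖ ^ 2) ^ ((-2 * δ - 2 * δ₁) / 2)) ≤
        C * r ^ n * ‖x‖ ^ (-1 - 2 * δ₁) ∧
      (∫ y in Metric.ball (0 : EuclideanSpace ℝ (Fin n)) 1, ‖y‖ ^ (-1 + 2 * δ)) ≤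
        C * r ^ n * ‖x‖ ^ (-1 - 2 * δ₁) ∧
      (∫ y in Metric.ball x r \ Metric.ball (0 : EuclideanSpace ℝ (Fin n)) 1,
          ‖y‖ ^ (-1 - 2 * δ₁)) ≤
        C * r ^ n * ‖x‖ ^ (-1 - 2 * δ₁) := by
  set E := EuclideanSpace ℝ (Fin n) with hEdef
  set p2 : ℝ := -1 + 2 * δ with hp2def
  set s : ℝ := (-2 * δ - 2 * δ₁) / 2 with hsdef
  set p : ℝ := -1 - 2 * δ₁ with hpdef
  have hn1 : (1:ℝ) ≤ n := by exact_mod_cast hn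
  have hp : -(n:ℝ) < p := by rw [hpdef]; linarith
  have hnp : 0 < (n:ℝ) + p := by rw [hpdef]; linarith
  have hp2 : -(n:ℝ) < p2 := by rw [hp2def]; linarith
  have hnp2 : 0 < (n:ℝ) + p2 := by rw [hp2def]; linarith
  have hple : p ≤ 0 := by rw [hpdef]; linarith
  have hexp : p2 + 2 * s = p := by rw [hp2def, hsdef, hpdef]; ring
  set Sr : ℝ := (S n).toReal with hSrdef
  have hSr : 0 ≤ Sr := ENNReal.toReal_nonneg
  set A : ℝ := max 1 (2 ^ s) with hAdef
  have hA1 : (1:ℝ) ≤ A := le_max_left _ _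
  have hA0 : (0:ℝ) ≤ A := le_trans zero_le_one hA1
  set T1 : ℝ := Sr * (1 / ((n:ℝ) + p2)) with hT1def
  have hT1 : 0 ≤ T1 := by positivity
  set C3 : ℝ := Sr * 3 ^ ((n:ℝ) + p) * 2 ^ (-p) / ((n:ℝ) + p) with hC3def
  have hC3 : 0 ≤ C3 := by positivity
  set C : ℝ := A * T1 * 2 ^ n + A * C3 + T1 * 2 ^ n + C3 + 1 with hCdef
  have hC : 0 < C := by positivity
  have hpow2n : (0:ℝ) ≤ 2 ^ n := by positivity
  have haux1 : (0:ℝ) ≤ A * T1 * 2 ^ n := by positivity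
  have haux2 : (0:ℝ) ≤ A * C3 := by positivity
  have haux3 : (0:ℝ) ≤ T1 * 2 ^ n := by positivity
  have hcC2 : T1 * 2 ^ n ≤ C := by rw [hCdef]; linarith
  have hcC3 : C3 ≤ C := by rw [hCdef]; linarith
  have hcC1 : A * T1 * 2 ^ n + A * C3 ≤ C := by rw [hCdef]; linarith
  -- pointwise bounds
  have hsmall : ∀ y : E, ‖y‖ < 1 → ‖y‖ ^ p2 * (1 + ‖y‖ ^ 2) ^ s ≤ A * ‖y‖ ^ p2 := by
    intro y hy
    have h01 : (0:ℝ) ≤ ‖y‖ := norm_nonneg y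
    have hb : ((1:ℝ) + ‖y‖ ^ 2) ^ s ≤ A := by
      rcases le_or_gt 0 s with hs0 | hs0
      · calc ((1:ℝ) + ‖y‖ ^ 2) ^ s ≤ (2:ℝ) ^ s :=
              Real.rpow_le_rpow (by positivity) (by nlinarith) hs0
          _ ≤ A := le_max_right _ _
      · calc ((1:ℝ) + ‖y‖ ^ 2) ^ s ≤ (1:ℝ) ^ s :=
              Real.rpow_le_rpow_of_nonpos one_pos (by nlinarith) hs0.le
          _ = 1 := Real.one_rpow s
          _ ≤ A := hA1
    calc ‖y‖ ^ p2 * (1 + ‖y‖ ^ 2) ^ s ≤ ‖y‖ ^ p2 * A :=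
          mul_le_mul_of_nonneg_left hb (Real.rpow_nonneg h01 _)
      _ = A * ‖y‖ ^ p2 := mul_comm _ _
  have hbig : ∀ y : E, 1 ≤ ‖y‖ → ‖y‖ ^ p2 * (1 + ‖y‖ ^ 2) ^ s ≤ A * ‖y‖ ^ p := by
    intro y hy
    have hy0 : (0:ℝ) < ‖y‖ := lt_of_lt_of_le one_pos hy
    have hsq : (‖y‖ ^ 2) ^ s = ‖y‖ ^ (2 * s) := by
      rw [← Real.rpow_natCast ‖y‖ 2, ← Real.rpow_mul hy0.le]
      norm_num
    have hb : ((1:ℝ) + ‖y‖ ^ 2) ^ s ≤ A * ‖y‖ ^ (2 * s) := by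
      rcases le_or_gt 0 s with hs0 | hs0
      · calc ((1:ℝ) + ‖y‖ ^ 2) ^ s ≤ (2 * ‖y‖ ^ 2) ^ s :=
              Real.rpow_le_rpow (by positivity) (by nlinarith) hs0
          _ = 2 ^ s * (‖y‖ ^ 2) ^ s := Real.mul_rpow (by norm_num) (by positivity)
          _ = 2 ^ s * ‖y‖ ^ (2 * s) := by rw [hsq]
          _ ≤ A * ‖y‖ ^ (2 * s) :=
              mul_le_mul_of_nonneg_right (le_max_right _ _) (Real.rpow_nonneg hy0.le _)
      · calc ((1:ℝ) + ‖y‖ ^ 2) ^ s ≤ (‖y‖ ^ 2) ^ s :=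
              Real.rpow_le_rpow_of_nonpos (by positivity) (by nlinarith) hs0.le
          _ = ‖y‖ ^ (2 * s) := hsq
          _ ≤ A * ‖y‖ ^ (2 * s) := by
              nth_rewrite 1 [← one_mul (‖y‖ ^ (2 * s))]
              exact mul_le_mul_of_nonneg_right hA1 (Real.rpow_nonneg hy0.le _)
    calc ‖y‖ ^ p2 * (1 + ‖y‖ ^ 2) ^ s ≤ ‖y‖ ^ p2 * (A * ‖y‖ ^ (2 * s)) :=
          mul_le_mul_of_nonneg_left hb (Real.rpow_nonneg hy0.le _)
      _ = A * (‖y‖ ^ p2 * ‖y‖ ^ (2 * s)) := by ring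
      _ = A * ‖y‖ ^ p := by rw [← Real.rpow_add hy0, hexp]
  refine ⟨C, hC, fun x hx r hr => ?_⟩
  have hx0 : (0:ℝ) < ‖x‖ := lt_of_lt_of_le one_pos hx
  have hr0 : (0:ℝ) < r := lt_of_lt_of_le (by linarith) hr
  have hx2r : ‖x‖ ≤ 2 * r := by linarith
  have hsub : Metric.ball x r ⊆ Metric.ball (0:E) (3*r) := by
    apply Metric.ball_subset_ball'
    rw [dist_zero_right]
    linarith
  set X : ℝ := r ^ n * ‖x‖ ^ p with hXdef
  have hX0 : 0 ≤ X := by positivity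
  -- key inequality 1 : 1 ≤ 2^n * X
  have key1 : (1:ℝ) ≤ 2 ^ n * X := by
    have hxn : ‖x‖ ^ n / 2 ^ n ≤ r ^ n := by
      rw [← div_pow]
      exact pow_le_pow_left₀ (by positivity) hr n
    have hxp : (1:ℝ) ≤ ‖x‖ ^ n * ‖x‖ ^ p := by
      have hh : ‖x‖ ^ n * ‖x‖ ^ p = ‖x‖ ^ ((n:ℝ) + p) := by
        rw [Real.rpow_add hx0, Real.rpow_natCast]
      rw [hh]
      exact Real.one_le_rpow hx hnp.le
    have h2n : (0:ℝ) < 2 ^ n := by positivity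
    have hxpn : (0:ℝ) ≤ ‖x‖ ^ p := Real.rpow_nonneg (norm_nonneg x) p
    calc (1:ℝ) ≤ ‖x‖ ^ n * ‖x‖ ^ p := hxp
      _ = 2 ^ n * (‖x‖ ^ n / 2 ^ n * ‖x‖ ^ p) := by field_simp
      _ ≤ 2 ^ n * (r ^ n * ‖x‖ ^ p) := by
          apply mul_le_mul_of_nonneg_left _ h2n.le
          exact mul_le_mul_of_nonneg_right hxn hxpn
  -- key inequality 2
  have key2 : Sr * ((3*r) ^ ((n:ℝ) + p) / ((n:ℝ) + p)) ≤ C3 * X := by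
    have e1 : ((3:ℝ)*r) ^ ((n:ℝ) + p) = 3 ^ ((n:ℝ) + p) * r ^ ((n:ℝ) + p) :=
      Real.mul_rpow (by norm_num) hr0.le
    have e2 : r ^ ((n:ℝ) + p) = r ^ n * r ^ p := by
      rw [Real.rpow_add hr0, Real.rpow_natCast]
    have e3 : r ^ p ≤ 2 ^ (-p) * ‖x‖ ^ p := by
      have h := Real.rpow_le_rpow_of_nonpos (by positivity : (0:ℝ) < ‖x‖/2) hr hple
      rw [Real.div_rpow (norm_nonneg x) (by norm_num)] at h
      rw [Real.rpow_neg (by norm_num : (0:ℝ) ≤ 2)]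
      have h2p : (0:ℝ) < 2 ^ p := Real.rpow_pos_of_pos two_pos p
      calc r ^ p ≤ ‖x‖ ^ p / 2 ^ p := h
        _ = (2 ^ p)⁻¹ * ‖x‖ ^ p := by ring
    have e4 : ((3:ℝ)*r) ^ ((n:ℝ) + p) ≤ 3 ^ ((n:ℝ) + p) * (2 ^ (-p) * X) := by
      rw [e1, e2]
      calc (3:ℝ) ^ ((n:ℝ)+p) * (r ^ n * r ^ p)
          ≤ 3 ^ ((n:ℝ)+p) * (r ^ n * (2 ^ (-p) * ‖x‖ ^ p)) :=
            mul_le_mul_of_nonneg_left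
              (mul_le_mul_of_nonneg_left e3 (pow_nonneg hr0.le n))
              (Real.rpow_nonneg (by norm_num) _)
        _ = 3 ^ ((n:ℝ)+p) * (2 ^ (-p) * X) := by rw [hXdef]; ring
    calc Sr * ((3*r) ^ ((n:ℝ) + p) / ((n:ℝ) + p))
        = Sr / ((n:ℝ) + p) * (3*r) ^ ((n:ℝ) + p) := by ring
      _ ≤ Sr / ((n:ℝ) + p) * (3 ^ ((n:ℝ) + p) * (2 ^ (-p) * X)) :=
          mul_le_mul_of_nonneg_left e4 (by positivity)
      _ = C3 * X := by rw [hC3def]; ring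
  have hT : T1 ≤ T1 * 2 ^ n * X := by
    calc T1 = T1 * 1 := (mul_one _).symm
      _ ≤ T1 * (2 ^ n * X) := mul_le_mul_of_nonneg_left key1 hT1
      _ = T1 * 2 ^ n * X := by ring
  -- lintegral values
  have LB1 : (∫⁻ y in Metric.ball (0:E) 1, ENNReal.ofReal (‖y‖ ^ p2))
      = S n * ENNReal.ofReal (1 / ((n:ℝ) + p2)) := by
    have h := lint_ball hn hp2 one_pos
    rw [Real.one_rpow] at h
    exact h
  have LB3 : (∫⁻ y in Metric.ball (0:E) (3*r), ENNReal.ofReal (‖y‖ ^ p))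
      = S n * ENNReal.ofReal ((3*r) ^ ((n:ℝ) + p) / ((n:ℝ) + p)) :=
    lint_ball hn hp (by positivity)
  set B2 : ℝ≥0∞ := S n * ENNReal.ofReal (1 / ((n:ℝ) + p2)) with hB2def
  set B3 : ℝ≥0∞ := S n * ENNReal.ofReal ((3*r) ^ ((n:ℝ) + p) / ((n:ℝ) + p)) with hB3def
  have hB2top : B2 ≠ ∞ := ENNReal.mul_ne_top (S_ne_top n) ENNReal.ofReal_ne_top
  have hB3top : B3 ≠ ∞ := ENNReal.mul_ne_top (S_ne_top n) ENNReal.ofReal_ne_top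
  have hB2r : B2.toReal = T1 := by
    rw [hB2def, ENNReal.toReal_mul, ENNReal.toReal_ofReal (by positivity), hT1def, hSrdef]
  have hB3r : B3.toReal = Sr * ((3*r) ^ ((n:ℝ) + p) / ((n:ℝ) + p)) := by
    rw [hB3def, ENNReal.toReal_mul, ENNReal.toReal_ofReal (by positivity), hSrdef]
  -- measurability and nonnegativity
  have hmeas2 : Measurable fun y : E => ‖y‖ ^ p2 := by fun_prop
  have hmeas3 : Measurable fun y : E => ‖y‖ ^ p := by fun_prop
  have hmeas1 : Measurable fun y : E => ‖y‖ ^ p2 * (1 + ‖y‖ ^ 2) ^ s := by fun_prop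
  have hnn2 : ∀ y : E, 0 ≤ ‖y‖ ^ p2 := fun y => Real.rpow_nonneg (norm_nonneg y) _
  have hnn3 : ∀ y : E, 0 ≤ ‖y‖ ^ p := fun y => Real.rpow_nonneg (norm_nonneg y) _
  have hnn1 : ∀ y : E, 0 ≤ ‖y‖ ^ p2 * (1 + ‖y‖ ^ 2) ^ s := fun y =>
    mul_nonneg (hnn2 y) (Real.rpow_nonneg (by positivity) _)
  -- piece 2
  have piece2 : (∫ y in Metric.ball (0:E) 1, ‖y‖ ^ p2) ≤ C * r ^ n * ‖x‖ ^ p := by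
    have hb := integral_le_of_lintegral_le hmeas2.aestronglyMeasurable
      (Filter.Eventually.of_forall hnn2) hB2top (le_of_eq LB1)
    rw [hB2r] at hb
    calc (∫ y in Metric.ball (0:E) 1, ‖y‖ ^ p2) ≤ T1 := hb
      _ ≤ T1 * 2 ^ n * X := hT
      _ ≤ C * X := mul_le_mul_of_nonneg_right hcC2 hX0
      _ = C * r ^ n * ‖x‖ ^ p := by rw [hXdef, mul_assoc]
  -- piece 3
  have piece3 : (∫ y in Metric.ball x r \ Metric.ball (0:E) 1, ‖y‖ ^ p)
      ≤ C * r ^ n * ‖x‖ ^ p := by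
    have hle : (∫⁻ y in Metric.ball x r \ Metric.ball (0:E) 1, ENNReal.ofReal (‖y‖ ^ p)) ≤ B3 := by
      calc (∫⁻ y in Metric.ball x r \ Metric.ball (0:E) 1, ENNReal.ofReal (‖y‖ ^ p))
          ≤ ∫⁻ y in Metric.ball (0:E) (3*r), ENNReal.ofReal (‖y‖ ^ p) :=
            lintegral_mono_set (Set.diff_subset.trans hsub)
        _ = B3 := LB3
    have hb := integral_le_of_lintegral_le hmeas3.aestronglyMeasurable
      (Filter.Eventually.of_forall hnn3) hB3top hle
    rw [hB3r] at hb
    calc (∫ y in Metric.ball x r \ Metric.ball (0:E) 1, ‖y‖ ^ p)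
        ≤ Sr * ((3*r) ^ ((n:ℝ) + p) / ((n:ℝ) + p)) := hb
      _ ≤ C3 * X := key2
      _ ≤ C * X := mul_le_mul_of_nonneg_right hcC3 hX0
      _ = C * r ^ n * ‖x‖ ^ p := by rw [hXdef, mul_assoc]
  -- piece 1
  have piece1 : (∫ y in Metric.ball x r, ‖y‖ ^ p2 * (1 + ‖y‖ ^ 2) ^ s)
      ≤ C * r ^ n * ‖x‖ ^ p := by
    have hpart1 : (∫⁻ y in Metric.ball x r ∩ Metric.ball (0:E) 1,
        ENNReal.ofReal (‖y‖ ^ p2 * (1 + ‖y‖ ^ 2) ^ s)) ≤ ENNReal.ofReal A * B2 := by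
      calc (∫⁻ y in Metric.ball x r ∩ Metric.ball (0:E) 1,
            ENNReal.ofReal (‖y‖ ^ p2 * (1 + ‖y‖ ^ 2) ^ s))
          ≤ ∫⁻ y in Metric.ball (0:E) 1, ENNReal.ofReal (‖y‖ ^ p2 * (1 + ‖y‖ ^ 2) ^ s) :=
            lintegral_mono_set Set.inter_subset_right
        _ ≤ ∫⁻ y in Metric.ball (0:E) 1, ENNReal.ofReal A * ENNReal.ofReal (‖y‖ ^ p2) := by
            refine setLIntegral_mono' measurableSet_ball fun y hy => ?_
            rw [← ENNReal.ofReal_mul hA0]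
            exact ENNReal.ofReal_le_ofReal (hsmall y (mem_ball_zero_iff.mp hy))
        _ = ENNReal.ofReal A * ∫⁻ y in Metric.ball (0:E) 1, ENNReal.ofReal (‖y‖ ^ p2) :=
            lintegral_const_mul' _ _ ENNReal.ofReal_ne_top
        _ = ENNReal.ofReal A * B2 := by rw [LB1]
    have hpart2 : (∫⁻ y in Metric.ball x r \ Metric.ball (0:E) 1,
        ENNReal.ofReal (‖y‖ ^ p2 * (1 + ‖y‖ ^ 2) ^ s)) ≤ ENNReal.ofReal A * B3 := by
      calc (∫⁻ y in Metric.ball x r \ Metric.ball (0:E) 1,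
            ENNReal.ofReal (‖y‖ ^ p2 * (1 + ‖y‖ ^ 2) ^ s))
          ≤ ∫⁻ y in Metric.ball x r \ Metric.ball (0:E) 1,
              ENNReal.ofReal A * ENNReal.ofReal (‖y‖ ^ p) := by
            refine setLIntegral_mono' (measurableSet_ball.diff measurableSet_ball) fun y hy => ?_
            have hy1 : 1 ≤ ‖y‖ := not_lt.mp fun h => hy.2 (mem_ball_zero_iff.mpr h)
            rw [← ENNReal.ofReal_mul hA0]
            exact ENNReal.ofReal_le_ofReal (hbig y hy1)
        _ = ENNReal.ofReal A * ∫⁻ y in Metric.ball x r \ Metric.ball (0:E) 1,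
              ENNReal.ofReal (‖y‖ ^ p) := lintegral_const_mul' _ _ ENNReal.ofReal_ne_top
        _ ≤ ENNReal.ofReal A * B3 := by
            refine mul_le_mul_right ?_ _
            calc (∫⁻ y in Metric.ball x r \ Metric.ball (0:E) 1, ENNReal.ofReal (‖y‖ ^ p))
                ≤ ∫⁻ y in Metric.ball (0:E) (3*r), ENNReal.ofReal (‖y‖ ^ p) :=
                  lintegral_mono_set (Set.diff_subset.trans hsub)
              _ = B3 := LB3
    have hle : (∫⁻ y in Metric.ball x r, ENNReal.ofReal (‖y‖ ^ p2 * (1 + ‖y‖ ^ 2) ^ s))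
        ≤ ENNReal.ofReal A * B2 + ENNReal.ofReal A * B3 := by
      calc (∫⁻ y in Metric.ball x r, ENNReal.ofReal (‖y‖ ^ p2 * (1 + ‖y‖ ^ 2) ^ s))
          = ∫⁻ y in (Metric.ball x r ∩ Metric.ball (0:E) 1) ∪
              (Metric.ball x r \ Metric.ball (0:E) 1),
              ENNReal.ofReal (‖y‖ ^ p2 * (1 + ‖y‖ ^ 2) ^ s) := by
            rw [Set.inter_union_diff]
        _ ≤ (∫⁻ y in Metric.ball x r ∩ Metric.ball (0:E) 1,
              ENNReal.ofReal (‖y‖ ^ p2 * (1 + ‖y‖ ^ 2) ^ s)) +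
            ∫⁻ y in Metric.ball x r \ Metric.ball (0:E) 1,
              ENNReal.ofReal (‖y‖ ^ p2 * (1 + ‖y‖ ^ 2) ^ s) := lintegral_union_le _ _ _
        _ ≤ ENNReal.ofReal A * B2 + ENNReal.ofReal A * B3 := add_le_add hpart1 hpart2
    have hBtop : ENNReal.ofReal A * B2 + ENNReal.ofReal A * B3 ≠ ∞ :=
      ENNReal.add_ne_top.mpr ⟨ENNReal.mul_ne_top ENNReal.ofReal_ne_top hB2top,
        ENNReal.mul_ne_top ENNReal.ofReal_ne_top hB3top⟩
    have hb := integral_le_of_lintegral_le hmeas1.aestronglyMeasurable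
      (Filter.Eventually.of_forall hnn1) hBtop hle
    have e5 : (ENNReal.ofReal A * B2).toReal = A * T1 := by
      rw [ENNReal.toReal_mul, ENNReal.toReal_ofReal hA0, hB2r]
    have e6 : (ENNReal.ofReal A * B3).toReal
        = A * (Sr * ((3*r) ^ ((n:ℝ) + p) / ((n:ℝ) + p))) := by
      rw [ENNReal.toReal_mul, ENNReal.toReal_ofReal hA0, hB3r]
    have hBr : (ENNReal.ofReal A * B2 + ENNReal.ofReal A * B3).toReal
        = A * T1 + A * (Sr * ((3*r) ^ ((n:ℝ) + p) / ((n:ℝ) + p))) := by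
      rw [ENNReal.toReal_add (ENNReal.mul_ne_top ENNReal.ofReal_ne_top hB2top)
        (ENNReal.mul_ne_top ENNReal.ofReal_ne_top hB3top), e5, e6]
    rw [hBr] at hb
    calc (∫ y in Metric.ball x r, ‖y‖ ^ p2 * (1 + ‖y‖ ^ 2) ^ s)
        ≤ A * T1 + A * (Sr * ((3*r) ^ ((n:ℝ) + p) / ((n:ℝ) + p))) := hb
      _ ≤ A * (T1 * 2 ^ n * X) + A * (C3 * X) :=
          add_le_add (mul_le_mul_of_nonneg_left hT hA0) (mul_le_mul_of_nonneg_left key2 hA0)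
      _ = (A * T1 * 2 ^ n + A * C3) * X := by ring
      _ ≤ C * X := mul_le_mul_of_nonneg_right hcC1 hX0
      _ = C * r ^ n * ‖x‖ ^ p := by rw [hXdef, mul_assoc]
  exact ⟨piece1, piece2, piece3⟩
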